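/- Let A = A^0 ⊕ ⋯ ⊕ A^n be a finite-dimensional commutative graded ℝ-algebra satisfying Poincaré duality with respect to deg_A : A^n → ℝ. Let c_i ∈ A^i for 1 ≤ i ≤ r and B = A[ζ]/(ζ^r + c_1 ζ^{r-1} + ⋯ + c_r). Suppose that for each i the multiplication map B^i → B^{i+1}, x ↦ ζx, has full rank (i.e., is injective for i < (n+r-1)/2 and surjective for i ≥ (n+r-1)/2, equivalently has maximal rank). Assume r ≤ n. Then multiplication by c_r gives an injective map A^i → A^{i+r} for all i ≤ (n−r)/2. -/
import Mathlib

open Polynomial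

noncomputable def pbPoly {A : Type*} [CommRing A] (r : ℕ) (c : ℕ → A) : A[X] :=
  X ^ r + ∑ i ∈ Finset.Icc 1 r, C (c i) * X ^ (r - i)

noncomputable def pbGrade {A : Type*} [CommRing A] [Algebra ℝ A] (𝒜 : ℕ → Submodule ℝ A)
    (r : ℕ) (c : ℕ → A) (k : ℕ) : Submodule ℝ (AdjoinRoot (pbPoly r c)) :=
  Submodule.span ℝ {b | ∃ i a, i < r ∧ i ≤ k ∧ a ∈ 𝒜 (k - i) ∧
    b = AdjoinRoot.root (pbPoly r c) ^ i * algebraMap A _ a}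

lemma pbPoly_coeff_self {A : Type*} [CommRing A] (r : ℕ) (c : ℕ → A) :
    (pbPoly r c).coeff r = 1 := by
  unfold pbPoly
  rw [coeff_add, coeff_X_pow, if_pos rfl, finset_sum_coeff]
  rcases Nat.eq_zero_or_pos r with h | h
  · subst h; simp
  have : ∀ i ∈ Finset.Icc 1 r, (C (c i) * X ^ (r - i)).coeff r = 0 := by
    intro i hi
    simp only [Finset.mem_Icc] at hi
    rw [coeff_C_mul, coeff_X_pow, if_neg (by omega), mul_zero]
  rw [Finset.sum_eq_zero this, add_zero]

lemma pbPoly_degree_le {A : Type*} [CommRing A] (r : ℕ) (c : ℕ → A) :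
    (pbPoly r c).degree ≤ r := by
  unfold pbPoly
  apply le_trans (degree_add_le _ _)
  apply max_le (by simpa using degree_X_pow_le r)
  apply le_trans (degree_sum_le _ _)
  apply Finset.sup_le
  intro i hi
  apply le_trans (degree_mul_le _ _)
  apply le_trans (add_le_add degree_C_le (degree_X_pow_le _))
  simp only [zero_add]
  exact_mod_cast Nat.cast_le.mpr (Nat.sub_le r i)

lemma pbPoly_monic {A : Type*} [CommRing A] (r : ℕ) (c : ℕ → A) :
    (pbPoly r c).Monic :=
  monic_of_degree_le r (pbPoly_degree_le r c) (pbPoly_coeff_self r c)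

lemma pbPoly_mul_X {A : Type*} [CommRing A] (r : ℕ) (hr : 1 ≤ r) (c : ℕ → A) :
    X * pbPoly (r - 1) c = pbPoly r c - C (c r) := by
  obtain ⟨m, rfl⟩ : ∃ m, r = m + 1 := ⟨r - 1, by omega⟩
  unfold pbPoly
  simp only [Nat.add_sub_cancel]
  rw [← Finset.insert_Icc_right_eq_Icc_add_one (show 1 ≤ m + 1 by omega),
    Finset.sum_insert (by simp), Nat.sub_self, pow_zero, mul_one, mul_add,
    Finset.mul_sum, ← pow_succ']
  have h2 : ∀ i ∈ Finset.Icc 1 m, X * (C (c i) * X ^ (m - i))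
      = C (c i) * X ^ (m + 1 - i) := by
    intro i hi
    simp only [Finset.mem_Icc] at hi
    rw [mul_left_comm, ← pow_succ']
    congr 2
    omega
  rw [Finset.sum_congr rfl h2]
  ring

/-- Bloch–Gieseker-type injectivity. If multiplication by `ζ` has full rank
`B^i → B^{i+1}` in every degree (injective below the middle, surjective at or above), and
`r ≤ n`, then multiplication by `c_r : A^i → A^{i+r}` is injective for all `i ≤ (n-r)/2`. -/
theorem stmt1 {A : Type*} [CommRing A] [Algebra ℝ A] [FiniteDimensional ℝ A]
    (𝒜 : ℕ → Submodule ℝ A) [GradedAlgebra 𝒜]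
    (n : ℕ) (htop : ∀ j, n < j → 𝒜 j = ⊥)
    (degA : A →ₗ[ℝ] ℝ)
    (hPD : ∀ i, ∀ x ∈ 𝒜 i, (∀ y ∈ 𝒜 (n - i), degA (x * y) = 0) → x = 0)
    (r : ℕ) (hr1 : 1 ≤ r) (hrn : r ≤ n)
    (c : ℕ → A) (hc : ∀ i, 1 ≤ i → i ≤ r → c i ∈ 𝒜 i)
    (hζinj : ∀ k, 2 * k < n + r - 1 → ∀ x ∈ pbGrade 𝒜 r c k,
      AdjoinRoot.root (pbPoly r c) * x = 0 → x = 0)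
    (hζsurj : ∀ k, n + r - 1 ≤ 2 * k → ∀ y ∈ pbGrade 𝒜 r c (k + 1),
      ∃ x ∈ pbGrade 𝒜 r c k, AdjoinRoot.root (pbPoly r c) * x = y) :
    ∀ i, 2 * i ≤ n - r → ∀ x ∈ 𝒜 i, c r * x = 0 → x = 0 := by
  intro i hi x hx hx0
  rcases subsingleton_or_nontrivial A with hA | hA
  · exact Subsingleton.elim x 0
  set p : A[X] := pbPoly r c with hp
  set q : A[X] := C x * pbPoly (r - 1) c with hqdef
  -- the element b = mk q lies in pbGrade (i + r - 1)
  have hb_mem : AdjoinRoot.mk p q ∈ pbGrade 𝒜 r c (i + r - 1) := by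
    have hexp : (pbPoly (r - 1) c : A[X]) =
        X ^ (r - 1) + ∑ j ∈ Finset.Icc 1 (r - 1), C (c j) * X ^ (r - 1 - j) := rfl
    rw [hqdef, map_mul, hexp, map_add, map_sum, mul_add, Finset.mul_sum]
    apply Submodule.add_mem
    · apply Submodule.subset_span
      refine ⟨r - 1, x, by omega, by omega, ?_, ?_⟩
      · have h : i + r - 1 - (r - 1) = i := by omega
        rw [h]; exact hx
      · rw [map_pow, AdjoinRoot.mk_X, AdjoinRoot.algebraMap_eq, mul_comm]
        rfl
    · apply Submodule.sum_mem
      intro j hj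
      simp only [Finset.mem_Icc] at hj
      apply Submodule.subset_span
      refine ⟨r - 1 - j, c j * x, by omega, by omega, ?_, ?_⟩
      · have h : i + r - 1 - (r - 1 - j) = j + i := by omega
        rw [h]
        exact SetLike.mul_mem_graded (hc j hj.1 (by omega)) hx
      · simp only [map_mul, map_pow, AdjoinRoot.mk_X, AdjoinRoot.mk_C,
          AdjoinRoot.algebraMap_eq]
        ring
  -- ζ * b = 0
  have hxc : x * c r = 0 := by rw [mul_comm]; exact hx0
  have hzb : AdjoinRoot.root p * AdjoinRoot.mk p q = 0 := by
    rw [hqdef, ← AdjoinRoot.mk_X (f := p), ← map_mul, mul_left_comm,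
      pbPoly_mul_X r hr1 c, ← hp, mul_sub, map_sub, ← map_mul, mul_comm (C x) p,
      AdjoinRoot.mk_eq_zero.mpr (Dvd.intro _ rfl), zero_sub]
    simp [← C_mul, hxc]
  -- injectivity hypothesis applies
  have hb0 : AdjoinRoot.mk p q = 0 :=
    hζinj (i + r - 1) (by omega) _ hb_mem hzb
  -- conclude q = 0
  have hdvd : p ∣ q := AdjoinRoot.mk_eq_zero.mp hb0
  have hdegq : q.degree < p.degree := by
    have hdp : p.degree = r := by
      apply le_antisymm (pbPoly_degree_le r c)
      apply le_degree_of_ne_zero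
      rw [pbPoly_coeff_self]; exact one_ne_zero
    rw [hdp, hqdef]
    apply lt_of_le_of_lt (degree_mul_le _ _)
    apply lt_of_le_of_lt (add_le_add degree_C_le (pbPoly_degree_le (r - 1) c))
    rw [zero_add]
    exact_mod_cast Nat.cast_lt.mpr (Nat.sub_lt hr1 one_pos)
  have hq0 : q = 0 := by
    have h := (modByMonic_eq_zero_iff_dvd (pbPoly_monic r c)).mpr hdvd
    rwa [(modByMonic_eq_self_iff (pbPoly_monic r c)).mpr hdegq] at h
  -- extract the coefficient of X^(r-1)
  have hcoeff : q.coeff (r - 1) = x := by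
    rw [hqdef, coeff_C_mul, pbPoly_coeff_self, mul_one]
  rw [hq0, coeff_zero] at hcoeff
  exact hcoeff.symm
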